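/- arXiv:1804.04574 — 8 statements merged into one kernel-verified Lean document; each statement's English description precedes it below -/
import Mathlib

section
/- Let x be a non-separable internal vertex of a network graph and let A be a Boolean predicate defined on pairs (b,b') of boundary vertices such that the path P(b,b') passes through x. Suppose A is true for at least one such pair and false for at least one such pair. Define S¹ (resp. S²) as the set of sources b for which there exists b' with x ∈ P(b,b') and A(b,b') true (resp. false), and R¹, R² analogously for receivers. Then S¹ ∩ S² and R¹ ∩ R² cannot both be empty. -/
/-- `Thru VB P x b b'` : `b, b'` are distinct boundary vertices and the routing
path `P b b'` passes through `x`. -/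
def Thru {V : Type} (VB : Set V) (P : V → V → List V) (x b b' : V) : Prop :=
  b ∈ VB ∧ b' ∈ VB ∧ b ≠ b' ∧ x ∈ P b b'

/-- The set of sources of paths through `x`. -/
def Sx {V : Type} (VB : Set V) (P : V → V → List V) (x : V) : Set V :=
  {b | ∃ b', Thru VB P x b b'}

/-- The set of receivers of paths through `x`. -/
def Rx {V : Type} (VB : Set V) (P : V → V → List V) (x : V) : Set V :=
  {b' | ∃ b, Thru VB P x b b'}

/-- `x` is separable: the sources and receivers of paths through `x` admit
nonempty disjoint partitions such that no path through `x` runs between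
pieces with different indices. -/
def Separable {V : Type} (VB : Set V) (P : V → V → List V) (x : V) : Prop :=
  ∃ S1 S2 R1 R2 : Set V,
    S1.Nonempty ∧ S2.Nonempty ∧ R1.Nonempty ∧ R2.Nonempty ∧
    S1 ∩ S2 = ∅ ∧ R1 ∩ R2 = ∅ ∧
    S1 ∪ S2 = Sx VB P x ∧ R1 ∪ R2 = Rx VB P x ∧
    (∀ b b', ((b ∈ S1 ∧ b' ∈ R2) ∨ (b ∈ S2 ∧ b' ∈ R1)) → ¬ Thru VB P x b b')

/-- Lemma 1 of the paper: for a non-separable internal vertex `x` and a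
non-constant predicate `A` on pairs of boundary vertices whose path passes
through `x`, the source sets `S¹, S²` (where `A` is true resp. false) and the
receiver sets `R¹, R²` cannot both be disjoint. -/
theorem stmt_0 {V : Type} (VB : Set V) (P : V → V → List V) (x : V)
    (hx : x ∉ VB) (hns : ¬ Separable VB P x) (A : V → V → Prop)
    (htrue : ∃ b b', Thru VB P x b b' ∧ A b b')
    (hfalse : ∃ b b', Thru VB P x b b' ∧ ¬ A b b') :
    ({b | ∃ b', Thru VB P x b b' ∧ A b b'} ∩
      {b | ∃ b', Thru VB P x b b' ∧ ¬ A b b'}).Nonempty ∨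
    ({b' | ∃ b, Thru VB P x b b' ∧ A b b'} ∩
      {b' | ∃ b, Thru VB P x b b' ∧ ¬ A b b'}).Nonempty := by
  by_contra hcon
  push_neg at hcon
  obtain ⟨hS, hR⟩ := hcon
  apply hns
  refine ⟨{b | ∃ b', Thru VB P x b b' ∧ A b b'},
    {b | ∃ b', Thru VB P x b b' ∧ ¬ A b b'},
    {b' | ∃ b, Thru VB P x b b' ∧ A b b'},
    {b' | ∃ b, Thru VB P x b b' ∧ ¬ A b b'}, ?_, ?_, ?_, ?_, hS, hR, ?_, ?_, ?_⟩
  · obtain ⟨b, b', h, hA⟩ := htrue; exact ⟨b, b', h, hA⟩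
  · obtain ⟨b, b', h, hA⟩ := hfalse; exact ⟨b, b', h, hA⟩
  · obtain ⟨b, b', h, hA⟩ := htrue; exact ⟨b', b, h, hA⟩
  · obtain ⟨b, b', h, hA⟩ := hfalse; exact ⟨b', b, h, hA⟩
  · ext b
    constructor
    · rintro (⟨b', h, _⟩ | ⟨b', h, _⟩) <;> exact ⟨b', h⟩
    · rintro ⟨b', h⟩
      by_cases hA : A b b'
      · exact Or.inl ⟨b', h, hA⟩
      · exact Or.inr ⟨b', h, hA⟩
  · ext b'
    constructor
    · rintro (⟨b, h, _⟩ | ⟨b, h, _⟩) <;> exact ⟨b, h⟩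
    · rintro ⟨b, h⟩
      by_cases hA : A b b'
      · exact Or.inl ⟨b, h, hA⟩
      · exact Or.inr ⟨b, h, hA⟩
  · rintro b b' (⟨hb1, hb2⟩ | ⟨hb1, hb2⟩) hT
    · by_cases hA : A b b'
      · have : b' ∈ ({b' | ∃ b, Thru VB P x b b' ∧ A b b'} ∩
          {b' | ∃ b, Thru VB P x b b' ∧ ¬ A b b'} : Set V) := ⟨⟨b, hT, hA⟩, hb2⟩
        rw [hR] at this; exact this
      · have : b ∈ ({b | ∃ b', Thru VB P x b b' ∧ A b b'} ∩
          {b | ∃ b', Thru VB P x b b' ∧ ¬ A b b'} : Set V) := ⟨hb1, ⟨b', hT, hA⟩⟩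
        rw [hS] at this; exact this
    · by_cases hA : A b b'
      · have : b ∈ ({b | ∃ b', Thru VB P x b b' ∧ A b b'} ∩
          {b | ∃ b', Thru VB P x b b' ∧ ¬ A b b'} : Set V) := ⟨⟨b', hT, hA⟩, hb1⟩
        rw [hS] at this; exact this
      · have : b' ∈ ({b' | ∃ b, Thru VB P x b b' ∧ A b b'} ∩
          {b' | ∃ b, Thru VB P x b b' ∧ ¬ A b b'} : Set V) := ⟨hb2, ⟨b, hT, hA⟩⟩
        rw [hR] at this; exact this
end

section
/- Let x be a non-separable internal vertex of a network graph with symmetric routing, and let B be a symmetric Boolean predicate (B(b,b') = B(b',b)) defined on pairs (b,b') of boundary vertices whose connecting path passes through x. Suppose B is non-constant on such pairs. Define S¹ as the set of boundary vertices b for which there exists b₁ with x ∈ P(b,b₁) and B(b,b₁) true, and S² analogously with B false. Then S¹ ∩ S² is nonempty. -/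
/-- Symmetric routing: edges come in opposite pairs and the path from `b'` to `b`
is the reversal of the path from `b` to `b'`. -/
def SymRouting {V : Type} (E : V → V → Prop) (VB : Set V) (P : V → V → List V) : Prop :=
  (∀ u v, E u v → E v u) ∧
  (∀ b b', b ∈ VB → b' ∈ VB → b ≠ b' → P b' b = (P b b').reverse)

/-- Separability of an internal vertex for symmetric routing: a nonempty disjoint
partition of the source set such that no path through `x` joins the two pieces. -/
def SeparableSym {V : Type} (VB : Set V) (P : V → V → List V) (x : V) : Prop :=
  ∃ S1 S2 : Set V, S1.Nonempty ∧ S2.Nonempty ∧ S1 ∩ S2 = ∅ ∧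
    S1 ∪ S2 = Sx VB P x ∧
    (∀ b1 ∈ S1, ∀ b2 ∈ S2, ¬ Thru VB P x b1 b2)

/-- Lemma 2 of the paper: for a non-separable internal vertex `x` of a network
graph with symmetric routing and a symmetric non-constant predicate `B` on pairs
of boundary vertices whose path passes through `x`, the sets `S¹` (sources of
paths where `B` holds) and `S²` (where `B` fails) intersect. -/
theorem stmt_1 {V : Type} (E : V → V → Prop) (VB : Set V) (P : V → V → List V)
    (hsr : SymRouting E VB P) (x : V) (hx : x ∉ VB)
    (hns : ¬ SeparableSym VB P x) (B : V → V → Prop)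
    (hBsym : ∀ b b', B b b' ↔ B b' b)
    (htrue : ∃ b b1, Thru VB P x b b1 ∧ B b b1)
    (hfalse : ∃ b b2, Thru VB P x b b2 ∧ ¬ B b b2) :
    ({b | ∃ b1, Thru VB P x b b1 ∧ B b b1} ∩
      {b | ∃ b2, Thru VB P x b b2 ∧ ¬ B b b2}).Nonempty := by
  classical
  by_contra hne
  set S1 := {b | ∃ b1, Thru VB P x b b1 ∧ B b b1} with hS1
  set S2 := {b | ∃ b2, Thru VB P x b b2 ∧ ¬ B b b2} with hS2
  have hthru : ∀ b b', Thru VB P x b b' → Thru VB P x b' b := by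
    rintro b b' ⟨hb, hb', hne', hmem⟩
    refine ⟨hb', hb, hne'.symm, ?_⟩
    rw [hsr.2 b b' hb hb' hne', List.mem_reverse]
    exact hmem
  have hempty : S1 ∩ S2 = ∅ := Set.not_nonempty_iff_eq_empty.mp hne
  apply hns
  refine ⟨S1, S2, ?_, ?_, hempty, ?_, ?_⟩
  · obtain ⟨b, b1, ht, hB⟩ := htrue; exact ⟨b, b1, ht, hB⟩
  · obtain ⟨b, b2, ht, hB⟩ := hfalse; exact ⟨b, b2, ht, hB⟩
  · ext b
    constructor
    · rintro (⟨b', ht, _⟩ | ⟨b', ht, _⟩) <;> exact ⟨b', ht⟩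
    · rintro ⟨b', ht⟩
      by_cases hB : B b b'
      · exact Or.inl ⟨b', ht, hB⟩
      · exact Or.inr ⟨b', ht, hB⟩
  · rintro b1 ⟨c1, ht1, hB1⟩ b2 ⟨c2, ht2, hB2⟩ ht
    by_cases h : B b1 b2
    · have : b2 ∈ S1 ∩ S2 := ⟨⟨b1, hthru _ _ ht, (hBsym b1 b2).mp h⟩, ⟨c2, ht2, hB2⟩⟩
      rw [hempty] at this; exact this
    · have : b1 ∈ S1 ∩ S2 := ⟨⟨c1, ht1, hB1⟩, ⟨b2, ht, h⟩⟩
      rw [hempty] at this; exact this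
end

section
/- In a network graph with the tree consistency property, for any three distinct boundary vertices b, b₁, b₂, the paths P(b,b₁) and P(b,b₂) can be written as P(b,b₁) = [b, x₁, ..., x_j, y₁, ..., b₁] and P(b,b₂) = [b, x₁, ..., x_j, z₁, ..., b₂] where the vertex sets {y₁, y₂, ...} and {z₁, z₂, ...} are disjoint; i.e., the two paths share a common initial segment and are vertex-disjoint thereafter. -/
/-- Well-formedness of a routing path system: each path `P b b'` between distinct
boundary vertices starts at `b`, ends at `b'`, is simple (no repeated vertices),
follows edges of `E`, and passes through no boundary vertex other than its
endpoints. -/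
def WellFormed {V : Type} (E : V → V → Prop) (VB : Set V) (P : V → V → List V) : Prop :=
  ∀ b b', b ∈ VB → b' ∈ VB → b ≠ b' →
    (P b b').head? = some b ∧ (P b b').getLast? = some b' ∧
    (P b b').Nodup ∧ List.Chain' E (P b b') ∧
    (∀ v ∈ P b b', v ∈ VB → v = b ∨ v = b')

/-- Tree consistency: the common part of any two routing paths is a connected
subpath, i.e. the set of common vertices is the vertex set of a single list `c`
which is a contiguous segment of both paths (possibly reversed in the second). -/
def TreeConsistent {V : Type} (VB : Set V) (P : V → V → List V) : Prop :=
  ∀ b1 b1' b2 b2', b1 ∈ VB → b1' ∈ VB → b2 ∈ VB → b2' ∈ VB → b1 ≠ b1' → b2 ≠ b2' →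
    ∃ c : List V, c <:+: P b1 b1' ∧ (c <:+: P b2 b2' ∨ c.reverse <:+: P b2 b2') ∧
      ∀ v, (v ∈ P b1 b1' ∧ v ∈ P b2 b2') ↔ v ∈ c

/-- If a list is nodup with head `b`, then any infix containing `b` is a prefix. -/
lemma prefix_of_infix_head' {V : Type} {l c : List V} {b : V} (hn : l.Nodup)
    (hh : l.head? = some b) (hi : c <:+: l) (hb : b ∈ c) : c <+: l := by
  obtain ⟨s, t, hst⟩ := hi
  cases s with
  | nil => exact ⟨t, by simpa using hst⟩
  | cons a s' =>
    subst hst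
    simp only [List.cons_append, List.head?_cons, Option.some.injEq] at hh
    subst hh
    simp only [List.cons_append, List.nodup_cons] at hn
    exact absurd (by simp [hb]) hn.1

/-- A nodup list whose head and last are both `b` is `[b]`. -/
lemma eq_singleton_of_head_last' {V : Type} {c : List V} {b : V} (hn : c.Nodup)
    (hh : c.head? = some b) (hl : c.getLast? = some b) : c = [b] := by
  cases c with
  | nil => simp at hh
  | cons a c' =>
    simp only [List.head?_cons, Option.some.injEq] at hh
    subst hh
    cases c' with
    | nil => rfl
    | cons a2 c'' =>
      exfalso
      rw [List.nodup_cons] at hn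
      rw [List.getLast?_cons_cons] at hl
      obtain ⟨h, h2⟩ := List.mem_getLast?_eq_getLast hl
      exact hn.1 (h2 ▸ List.getLast_mem h)

/-- In a network graph with the tree consistency property, two paths out of the
same boundary vertex `b` share a common initial segment and are vertex-disjoint
thereafter. -/
theorem stmt_2 {V : Type} (E : V → V → Prop) (VB : Set V) (P : V → V → List V)
    (hwf : WellFormed E VB P) (htc : TreeConsistent VB P)
    (b b1 b2 : V) (hb : b ∈ VB) (hb1 : b1 ∈ VB) (hb2 : b2 ∈ VB)
    (hbb1 : b ≠ b1) (hbb2 : b ≠ b2) (hb12 : b1 ≠ b2) :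
    ∃ c y z : List V, P b b1 = c ++ y ∧ P b b2 = c ++ z ∧ c ≠ [] ∧
      ∀ v ∈ y, v ∉ z := by
  obtain ⟨c, hi1, hi2, hmem⟩ := htc b b1 b b2 hb hb1 hb hb2 hbb1 hbb2
  obtain ⟨hh1, hl1, hn1, -, -⟩ := hwf b b1 hb hb1 hbb1
  obtain ⟨hh2, hl2, hn2, -, -⟩ := hwf b b2 hb hb2 hbb2
  have hbp1 : b ∈ P b b1 := List.mem_of_mem_head? (by rw [hh1]; rfl)
  have hbp2 : b ∈ P b b2 := List.mem_of_mem_head? (by rw [hh2]; rfl)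
  have hbc : b ∈ c := (hmem b).1 ⟨hbp1, hbp2⟩
  have hp1 : c <+: P b b1 := prefix_of_infix_head' hn1 hh1 hi1 hbc
  have hp2 : c <+: P b b2 := by
    rcases hi2 with h | h
    · exact prefix_of_infix_head' hn2 hh2 h hbc
    · have hrev : c.reverse <+: P b b2 :=
        prefix_of_infix_head' hn2 hh2 h (by simpa using hbc)
      -- head of c is b (from hp1), head of c.reverse is b (from hrev), so c = [b]
      have hch : c.head? = some b := by
        obtain ⟨t, ht⟩ := hp1
        cases c with
        | nil => simp at hbc
        | cons a c' =>
          rw [← ht] at hh1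
          simpa using hh1
      have hcl : c.getLast? = some b := by
        obtain ⟨t, ht⟩ := hrev
        have := c.reverse.head?_eq_head (by
          intro hnil
          rw [List.reverse_eq_nil_iff] at hnil
          subst hnil; simp at hbc)
        rw [← ht] at hh2
        cases hcr : c.reverse with
        | nil => rw [List.reverse_eq_nil_iff] at hcr; subst hcr; simp at hbc
        | cons a cr' =>
          rw [hcr] at hh2
          simp only [List.cons_append, List.head?_cons, Option.some.injEq] at hh2
          rw [List.getLast?_eq_head?_reverse, hcr]
          simp [hh2]
      have hcn : c.Nodup := (hi1.sublist).nodup hn1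
      have : c = [b] := eq_singleton_of_head_last' hcn hch hcl
      subst this
      simpa using hrev
  obtain ⟨y, hy⟩ := hp1
  obtain ⟨z, hz⟩ := hp2
  refine ⟨c, y, z, hy.symm, hz.symm, fun hnil => by subst hnil; simp at hbc, ?_⟩
  intro v hv hvz
  have hv1 : v ∈ P b b1 := by rw [← hy]; exact List.mem_append_right _ hv
  have hv2 : v ∈ P b b2 := by rw [← hz]; exact List.mem_append_right _ hvz
  have hvc : v ∈ c := (hmem v).1 ⟨hv1, hv2⟩
  rw [← hy, List.nodup_append] at hn1
  exact hn1.2.2 v hvc v hv rfl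
end

section
/- Let x be an internal vertex of a network graph with the tree consistency property. Define a relation on S_x by b₁ ∼ b₂ if there exists a boundary vertex b̂ with x ∈ P(b₁,b̂) and x ∈ P(b₂,b̂), and take its transitive closure ∼_S; define ∼_R dually on R_x. Then these relations are dual: if x ∈ P(b₁,b̂₁) and x ∈ P(b₂,b̂₂), then b₁ ∼_S b₂ if and only if b̂₁ ∼_R b̂₂. -/
/-- Base relation on sources: `b₁ ∼ b₂` if some common receiver `b̂` has `x` on
both `P b₁ b̂` and `P b₂ b̂`. -/
def SRel {V : Type} (VB : Set V) (P : V → V → List V) (x : V) : V → V → Prop :=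
  fun b1 b2 => ∃ bh, Thru VB P x b1 bh ∧ Thru VB P x b2 bh

/-- Base relation on receivers: `b̂₁ ∼ b̂₂` if some common source `b` has `x` on
both `P b b̂₁` and `P b b̂₂`. -/
def RRel {V : Type} (VB : Set V) (P : V → V → List V) (x : V) : V → V → Prop :=
  fun bh1 bh2 => ∃ b, Thru VB P x b bh1 ∧ Thru VB P x b bh2

/-- Duality of the source and receiver equivalence relations at an internal
vertex `x`: if `x ∈ P(b₁,b̂₁)` and `x ∈ P(b₂,b̂₂)`, then `b₁ ∼_S b₂` iff
`b̂₁ ∼_R b̂₂` (transitive closures of the base relations). -/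
theorem stmt_5 {V : Type} (E : V → V → Prop) (VB : Set V) (P : V → V → List V)
    (hwf : WellFormed E VB P) (htc : TreeConsistent VB P)
    (x : V) (hx : x ∉ VB) :
    ∀ b1 b2 bh1 bh2 : V, Thru VB P x b1 bh1 → Thru VB P x b2 bh2 →
      (Relation.TransGen (SRel VB P x) b1 b2 ↔
        Relation.TransGen (RRel VB P x) bh1 bh2) := by
  have key : ∀ (T : V → V → Prop) (b1 b2 : V),
      Relation.TransGen (fun a b => ∃ c, T a c ∧ T b c) b1 b2 →
      ∀ bh1 bh2, T b1 bh1 → T b2 bh2 →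
      Relation.TransGen (fun a b => ∃ c, T c a ∧ T c b) bh1 bh2 := by
    intro T b1 b2 h
    induction h with
    | single hs =>
      intro bh1 bh2 h1 h2
      obtain ⟨bh, hb1, hb2⟩ := hs
      exact (Relation.TransGen.single ⟨b1, h1, hb1⟩).tail ⟨_, hb2, h2⟩
    | tail hT hs ih =>
      intro bh1 bh2 h1 h2
      obtain ⟨bh, hc, hb2⟩ := hs
      exact (ih bh1 bh h1 hc).tail ⟨_, hb2, h2⟩
  intro b1 b2 bh1 bh2 h1 h2
  constructor
  · intro h
    exact key (Thru VB P x) b1 b2 h bh1 bh2 h1 h2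
  · intro h
    exact key (fun a b => Thru VB P x b a) bh1 bh2 h b1 b2 h1 h2
end

section
/- Let x be an internal vertex of a network graph with the tree consistency property. If S_x = S¹ ∪ S² and R_x = R¹ ∪ R² are nonempty disjoint partitions witnessing separability of x, then for any b ∈ S_x, the equivalence class [b]_S under the source relation ∼_S is entirely contained in S¹ or entirely contained in S². (That is, the equivalence classes of ∼_S give the finest separating partition.) -/
/-- If `S¹,S²,R¹,R²` is a nonempty disjoint separating partition for the internal
vertex `x`, then every equivalence class of the source relation `∼_S` is entirely
contained in `S¹` or entirely contained in `S²`. -/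
theorem stmt_7 {V : Type} (E : V → V → Prop) (VB : Set V) (P : V → V → List V)
    (hwf : WellFormed E VB P) (htc : TreeConsistent VB P)
    (x : V) (hx : x ∉ VB)
    (S1 S2 R1 R2 : Set V)
    (hS1 : S1.Nonempty) (hS2 : S2.Nonempty) (hR1 : R1.Nonempty) (hR2 : R2.Nonempty)
    (hSdisj : S1 ∩ S2 = ∅) (hRdisj : R1 ∩ R2 = ∅)
    (hSuni : S1 ∪ S2 = Sx VB P x) (hRuni : R1 ∪ R2 = Rx VB P x)
    (hsep : ∀ b b', ((b ∈ S1 ∧ b' ∈ R2) ∨ (b ∈ S2 ∧ b' ∈ R1)) → ¬ Thru VB P x b b') :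
    ∀ b ∈ Sx VB P x,
      {b' | Relation.TransGen (SRel VB P x) b b'} ⊆ S1 ∨
      {b' | Relation.TransGen (SRel VB P x) b b'} ⊆ S2 := by
  -- Key step lemma: SRel preserves membership both ways
  have key : ∀ b1 b2, SRel VB P x b1 b2 →
      (b1 ∈ S1 ∧ b2 ∈ S1) ∨ (b1 ∈ S2 ∧ b2 ∈ S2) := by
    intro b1 b2 ⟨bh, h1, h2⟩
    have hb1 : b1 ∈ Sx VB P x := ⟨bh, h1⟩
    have hb2 : b2 ∈ Sx VB P x := ⟨bh, h2⟩
    have hbh : bh ∈ Rx VB P x := ⟨b1, h1⟩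
    rw [← hRuni] at hbh
    rw [← hSuni] at hb1 hb2
    cases hbh with
    | inl hr =>
      left
      constructor
      · rcases hb1 with h | h
        · exact h
        · exact absurd h1 (hsep b1 bh (Or.inr ⟨h, hr⟩))
      · rcases hb2 with h | h
        · exact h
        · exact absurd h2 (hsep b2 bh (Or.inr ⟨h, hr⟩))
    | inr hr =>
      right
      constructor
      · rcases hb1 with h | h
        · exact absurd h1 (hsep b1 bh (Or.inl ⟨h, hr⟩))
        · exact h
      · rcases hb2 with h | h
        · exact absurd h2 (hsep b2 bh (Or.inl ⟨h, hr⟩))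
        · exact h
  have hd : ∀ y, y ∈ S1 → y ∈ S2 → False := by
    intro y hy1 hy2
    have : y ∈ S1 ∩ S2 := ⟨hy1, hy2⟩
    rw [hSdisj] at this
    exact this
  have step1 : ∀ b1 b2, SRel VB P x b1 b2 → b1 ∈ S1 → b2 ∈ S1 := by
    intro b1 b2 h hb1
    rcases key b1 b2 h with ⟨_, h2⟩ | ⟨h1, _⟩
    · exact h2
    · exact absurd hb1 (fun c => hd b1 c h1)
  have step2 : ∀ b1 b2, SRel VB P x b1 b2 → b1 ∈ S2 → b2 ∈ S2 := by
    intro b1 b2 h hb1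
    rcases key b1 b2 h with ⟨h1, _⟩ | ⟨_, h2⟩
    · exact absurd h1 (fun c => hd b1 c hb1)
    · exact h2
  intro b hb
  rw [← hSuni] at hb
  cases hb with
  | inl h =>
    left
    intro b' hb'
    induction hb' with
    | single hr => exact step1 _ _ hr h
    | tail _ hr ih => exact step1 _ _ hr ih
  | inr h =>
    right
    intro b' hb'
    induction hb' with
    | single hr => exact step2 _ _ hr h
    | tail _ hr ih => exact step2 _ _ hr ih
end

section
/- In a network graph with the tree consistency property, if two paths P(b,b₁) and P(b,b₂) from the same source b both pass through a vertex x, then the two paths coincide (traverse the same sequence of vertices and edges) from b up to x. -/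
lemma prefix_of_infix_head_mem {V : Type} {l c : List V} {a : V}
    (hnd : l.Nodup) (hh : l.head? = some a) (hc : c <:+: l) (ha : a ∈ c) :
    c <+: l := by
  obtain ⟨s, t, hl⟩ := hc
  cases s with
  | nil => exact ⟨t, by simpa using hl⟩
  | cons a' s' =>
    exfalso
    subst hl
    simp only [List.cons_append, List.head?_cons, Option.some.injEq] at hh
    subst hh
    simp only [List.cons_append, List.nodup_cons, List.mem_append] at hnd
    exact hnd.1 (Or.inl (Or.inr ha))

/-- In a tree-consistent network graph, two paths from the same source that both
pass through a vertex `x` coincide from the source up to `x`: they are of the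
form `c ++ y` and `c ++ z` with `x` on the common initial segment `c`. -/
theorem stmt_9 {V : Type} (E : V → V → Prop) (VB : Set V) (P : V → V → List V)
    (hwf : WellFormed E VB P) (htc : TreeConsistent VB P)
    (b b1 b2 : V) (hb : b ∈ VB) (hb1 : b1 ∈ VB) (hb2 : b2 ∈ VB)
    (hbb1 : b ≠ b1) (hbb2 : b ≠ b2) (hb12 : b1 ≠ b2)
    (x : V) (hx1 : x ∈ P b b1) (hx2 : x ∈ P b b2) :
    ∃ c y z : List V, P b b1 = c ++ y ∧ P b b2 = c ++ z ∧ x ∈ c := by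
  obtain ⟨hh1, -, hnd1, -, -⟩ := hwf b b1 hb hb1 hbb1
  obtain ⟨hh2, -, hnd2, -, -⟩ := hwf b b2 hb hb2 hbb2
  obtain ⟨c, hc1, hc2, hmem⟩ := htc b b1 b b2 hb hb1 hb hb2 hbb1 hbb2
  have hbmem1 : b ∈ P b b1 := List.mem_of_mem_head? (by rw [hh1]; rfl)
  have hbmem2 : b ∈ P b b2 := List.mem_of_mem_head? (by rw [hh2]; rfl)
  have hbc : b ∈ c := (hmem b).mp ⟨hbmem1, hbmem2⟩
  have hxc : x ∈ c := (hmem x).mp ⟨hx1, hx2⟩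
  obtain ⟨y, hy⟩ := prefix_of_infix_head_mem hnd1 hh1 hc1 hbc
  rcases hc2 with h | h
  · obtain ⟨z, hz⟩ := prefix_of_infix_head_mem hnd2 hh2 h hbc
    exact ⟨c, y, z, hy.symm, hz.symm, hxc⟩
  · obtain ⟨z, hz⟩ := prefix_of_infix_head_mem hnd2 hh2 h (by simpa using hbc)
    cases c with
    | nil => simp at hbc
    | cons a cs =>
      have ha : a = b := by rw [← hy] at hh1; simpa using hh1
      subst ha
      cases cs with
      | nil => exact ⟨[a], y, z, hy.symm, by simpa using hz.symm, by simpa using hxc⟩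
      | cons a' cs' =>
        exfalso
        rw [← hz] at hh2
        have hne : ((a :: a' :: cs').reverse) ≠ [] := by simp
        rw [List.head?_append_of_ne_nil _ hne, List.head?_reverse] at hh2
        rw [List.getLast?_cons_cons] at hh2
        have hmem' : a ∈ a' :: cs' := List.mem_of_mem_getLast? (by rw [hh2]; rfl)
        have hndc : (a :: a' :: cs').Nodup := hnd1.sublist hc1.sublist
        exact (List.nodup_cons.mp hndc).1 hmem'
end

section
/- Let x be a separable internal vertex of a network graph with tree consistency, split according to a separating partition S_x = S¹∪S², R_x = R¹∪R² into two vertices x₁ (serving paths from S¹ to R¹) and x₂ (serving paths from S² to R²). Then for every triple of boundary vertices (b, b₁, b₂), the length of the intersection P(b,b₁) ∩ P(b,b₂) is unchanged by the split, and likewise for intersections P(b₁,b) ∩ P(b₂,b); hence the Path Correlation Data of the split graph equals that of the original graph. -/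
/-- The list of directed edges traversed by a path (as consecutive pairs). -/
def pathEdges {V : Type} (p : List V) : List (V × V) := p.zip p.tail

/-- The length of a path: the sum of its edge weights. -/
def pathLen {V : Type} (W : V × V → ℝ) (p : List V) : ℝ :=
  ((pathEdges p).map W).sum

/-- The length of the intersection of two paths: sum of weights of the edges
common to both. -/
def interLen {V : Type} [DecidableEq V] (W : V × V → ℝ) (p q : List V) : ℝ :=
  (((pathEdges p).filter (fun e => decide (e ∈ pathEdges q))).map W).sum

lemma pathEdges_map {V : Type} (f : V → V) (l : List V) :
    pathEdges (l.map f) = (pathEdges l).map (Prod.map f f) := by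
  simp [pathEdges, ← List.map_tail, List.zip_map]

lemma mem_of_mem_pathEdges {V : Type} {e : V × V} {l : List V}
    (h : e ∈ pathEdges l) : e.1 ∈ l ∧ e.2 ∈ l := by
  obtain ⟨u, v⟩ := e
  have := List.of_mem_zip h
  exact ⟨this.1, List.mem_of_mem_tail this.2⟩

lemma pathLen_key {V : Type} (W W' : V × V → ℝ) (π : V → V)
    (hW' : ∀ u v : V, W' (u, v) = W (π u, π v)) (p' : List V) :
    pathLen W' p' = pathLen W (p'.map π) := by
  have hWc : W ∘ Prod.map π π = W' := by
    funext e; obtain ⟨u, v⟩ := e; simp [hW']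
  rw [pathLen, pathLen, pathEdges_map, List.map_map, hWc]

lemma interLen_key {V : Type} [DecidableEq V] (W W' : V × V → ℝ) (π : V → V)
    (x x1 x2 : V) (p' q' : List V)
    (hπ1 : π x1 = x) (hπ2 : π x2 = x)
    (hπid : ∀ v, v ≠ x1 → v ≠ x2 → π v = v)
    (hW' : ∀ u v : V, W' (u, v) = W (π u, π v))
    (hxp : x ∉ p') (hxq : x ∉ q')
    (h12 : ¬(x1 ∈ p' ∧ x2 ∈ q')) (h21 : ¬(x2 ∈ p' ∧ x1 ∈ q')) :
    interLen W' p' q' = interLen W (p'.map π) (q'.map π) := by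
  have hinj : ∀ u v : V, u ∈ p' → v ∈ q' → π u = π v → u = v := by
    intro u v hu hv huv
    by_cases hu1 : u = x1
    · rw [hu1, hπ1] at huv
      by_cases hv1 : v = x1
      · rw [hu1, hv1]
      by_cases hv2 : v = x2
      · exact absurd ⟨hu1 ▸ hu, hv2 ▸ hv⟩ h12
      · rw [hπid v hv1 hv2] at huv; exact absurd (huv ▸ hv) hxq
    by_cases hu2 : u = x2
    · rw [hu2, hπ2] at huv
      by_cases hv1 : v = x1
      · exact absurd ⟨hu2 ▸ hu, hv1 ▸ hv⟩ h21
      by_cases hv2 : v = x2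
      · rw [hu2, hv2]
      · rw [hπid v hv1 hv2] at huv; exact absurd (huv ▸ hv) hxq
    · rw [hπid u hu1 hu2] at huv
      by_cases hv1 : v = x1
      · rw [hv1, hπ1] at huv; exact absurd (huv ▸ hu) hxp
      by_cases hv2 : v = x2
      · rw [hv2, hπ2] at huv; exact absurd (huv ▸ hu) hxp
      · rw [hπid v hv1 hv2] at huv; exact huv
  have hWc : W ∘ Prod.map π π = W' := by
    funext e; obtain ⟨u, v⟩ := e; simp [hW']
  rw [interLen, interLen, pathEdges_map, pathEdges_map, List.filter_map, List.map_map, hWc]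
  congr 1
  apply congrArg
  symm
  apply List.filter_congr
  intro e he
  simp only [Function.comp_apply, decide_eq_decide, List.mem_map]
  constructor
  · rintro ⟨f, hf, hfe⟩
    have h1 := mem_of_mem_pathEdges he
    have h2 := mem_of_mem_pathEdges hf
    have e1 : e.1 = f.1 := hinj e.1 f.1 h1.1 h2.1 (congrArg Prod.fst hfe).symm
    have e2 : e.2 = f.2 := hinj e.2 f.2 h1.2 h2.2 (congrArg Prod.snd hfe).symm
    have : f = e := Prod.ext e1.symm e2.symm
    exact this ▸ hf
  · intro h; exact ⟨e, h, rfl⟩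

/-- Splitting a separable internal vertex `x` into two vertices `x₁, x₂`
according to a separating partition `S¹∪S², R¹∪R²` leaves the Path Correlation
Data unchanged: all path lengths, source-side intersection lengths and
receiver-side intersection lengths are the same before and after the split. -/
theorem stmt_11 {V : Type} [DecidableEq V]
    (E : V → V → Prop) (W : V × V → ℝ) (VB : Set V) (P : V → V → List V)
    (hwf : WellFormed E VB P) (htc : TreeConsistent VB P)
    (x : V) (hx : x ∉ VB)
    -- a separating partition for x
    (S1 S2 R1 R2 : Set V)
    (hS1 : S1.Nonempty) (hS2 : S2.Nonempty) (hR1 : R1.Nonempty) (hR2 : R2.Nonempty)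
    (hSdisj : S1 ∩ S2 = ∅) (hRdisj : R1 ∩ R2 = ∅)
    (hSuni : S1 ∪ S2 = Sx VB P x) (hRuni : R1 ∪ R2 = Rx VB P x)
    (hsep : ∀ b b', ((b ∈ S1 ∧ b' ∈ R2) ∨ (b ∈ S2 ∧ b' ∈ R1)) → ¬ Thru VB P x b b')
    -- the split graph: x replaced by x₁ (serving S¹→R¹) and x₂ (serving S²→R²)
    (x1 x2 : V) (E' : V → V → Prop) (W' : V × V → ℝ) (P' : V → V → List V)
    (hx1x2 : x1 ≠ x2) (hx1x : x1 ≠ x) (hx2x : x2 ≠ x)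
    (hx1B : x1 ∉ VB) (hx2B : x2 ∉ VB)
    (hfresh : ∀ b b', b ∈ VB → b' ∈ VB → b ≠ b' → x1 ∉ P b b' ∧ x2 ∉ P b b')
    (π : V → V) (hπ1 : π x1 = x) (hπ2 : π x2 = x)
    (hπid : ∀ v, v ≠ x1 → v ≠ x2 → π v = v)
    (hwf' : WellFormed E' VB P')
    (hproj : ∀ b b', b ∈ VB → b' ∈ VB → b ≠ b' → (P' b b').map π = P b b')
    (hW' : ∀ u v : V, W' (u, v) = W (π u, π v))
    (hxgone : ∀ b b', b ∈ VB → b' ∈ VB → b ≠ b' → x ∉ P' b b')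
    (hsplit1 : ∀ b b', Thru VB P x b b' → b ∈ S1 → x1 ∈ P' b b' ∧ x2 ∉ P' b b')
    (hsplit2 : ∀ b b', Thru VB P x b b' → b ∈ S2 → x2 ∈ P' b b' ∧ x1 ∉ P' b b') :
    ∀ b b1 b2 : V, b ∈ VB → b1 ∈ VB → b2 ∈ VB → b ≠ b1 → b ≠ b2 → b1 ≠ b2 →
      pathLen W' (P' b b1) = pathLen W (P b b1) ∧
      interLen W' (P' b b1) (P' b b2) = interLen W (P b b1) (P b b2) ∧
      interLen W' (P' b1 b) (P' b2 b) = interLen W (P b1 b) (P b2 b) := by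
  intro b b1 b2 hb hb1 hb2 hbb1 hbb2 hb1b2
  -- x1/x2 in a split path imply x ∈ the original path, hence Thru
  have hthru : ∀ a a' y, a ∈ VB → a' ∈ VB → a ≠ a' → y ∈ P' a a' → π y = x →
      Thru VB P x a a' := by
    intro a a' y ha ha' haa' hy hyx
    refine ⟨ha, ha', haa', ?_⟩
    rw [← hproj a a' ha ha' haa']
    exact hyx ▸ List.mem_map_of_mem (f := π) hy
  refine ⟨?_, ?_, ?_⟩
  · rw [← hproj b b1 hb hb1 hbb1]
    exact pathLen_key W W' π hW' (P' b b1)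
  · rw [← hproj b b1 hb hb1 hbb1, ← hproj b b2 hb hb2 hbb2]
    refine interLen_key W W' π x x1 x2 _ _ hπ1 hπ2 hπid hW'
      (hxgone b b1 hb hb1 hbb1) (hxgone b b2 hb hb2 hbb2) ?_ ?_
    · rintro ⟨h1, h2⟩
      have t1 := hthru b b1 x1 hb hb1 hbb1 h1 hπ1
      have t2 := hthru b b2 x2 hb hb2 hbb2 h2 hπ2
      have hbS : b ∈ S1 ∪ S2 := hSuni ▸ (⟨b1, t1⟩ : b ∈ Sx VB P x)
      rcases hbS with hbS | hbS
      · exact (hsplit1 b b2 t2 hbS).2 h2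
      · exact (hsplit2 b b1 t1 hbS).2 h1
    · rintro ⟨h1, h2⟩
      have t1 := hthru b b1 x2 hb hb1 hbb1 h1 hπ2
      have t2 := hthru b b2 x1 hb hb2 hbb2 h2 hπ1
      have hbS : b ∈ S1 ∪ S2 := hSuni ▸ (⟨b1, t1⟩ : b ∈ Sx VB P x)
      rcases hbS with hbS | hbS
      · exact (hsplit1 b b1 t1 hbS).2 h1
      · exact (hsplit2 b b2 t2 hbS).2 h2
  · rw [← hproj b1 b hb1 hb (Ne.symm hbb1), ← hproj b2 b hb2 hb (Ne.symm hbb2)]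
    have hb1b : b1 ≠ b := fun h => hbb1 h.symm
    have hb2b : b2 ≠ b := fun h => hbb2 h.symm
    refine interLen_key W W' π x x1 x2 _ _ hπ1 hπ2 hπid hW'
      (hxgone b1 b hb1 hb hb1b) (hxgone b2 b hb2 hb hb2b) ?_ ?_
    · rintro ⟨h1, h2⟩
      have t1 := hthru b1 b x1 hb1 hb hb1b h1 hπ1
      have t2 := hthru b2 b x2 hb2 hb hb2b h2 hπ2
      have hbR : b ∈ R1 ∪ R2 := hRuni ▸ (⟨b1, t1⟩ : b ∈ Rx VB P x)
      have hS1' : b1 ∈ S1 ∪ S2 := hSuni ▸ (⟨b, t1⟩ : b1 ∈ Sx VB P x)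
      have hS2' : b2 ∈ S1 ∪ S2 := hSuni ▸ (⟨b, t2⟩ : b2 ∈ Sx VB P x)
      rcases hbR with hbR | hbR
      · have hb2S1 : b2 ∈ S1 := by
          rcases hS2' with h | h
          · exact h
          · exact absurd t2 (hsep b2 b (Or.inr ⟨h, hbR⟩))
        exact (hsplit1 b2 b t2 hb2S1).2 h2
      · have hb1S2 : b1 ∈ S2 := by
          rcases hS1' with h | h
          · exact absurd t1 (hsep b1 b (Or.inl ⟨h, hbR⟩))
          · exact h
        exact (hsplit2 b1 b t1 hb1S2).2 h1
    · rintro ⟨h1, h2⟩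
      have t1 := hthru b1 b x2 hb1 hb hb1b h1 hπ2
      have t2 := hthru b2 b x1 hb2 hb hb2b h2 hπ1
      have hbR : b ∈ R1 ∪ R2 := hRuni ▸ (⟨b1, t1⟩ : b ∈ Rx VB P x)
      have hS1' : b1 ∈ S1 ∪ S2 := hSuni ▸ (⟨b, t1⟩ : b1 ∈ Sx VB P x)
      have hS2' : b2 ∈ S1 ∪ S2 := hSuni ▸ (⟨b, t2⟩ : b2 ∈ Sx VB P x)
      rcases hbR with hbR | hbR
      · have hb1S1 : b1 ∈ S1 := by
          rcases hS1' with h | h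
          · exact h
          · exact absurd t1 (hsep b1 b (Or.inr ⟨h, hbR⟩))
        exact (hsplit1 b1 b t1 hb1S1).2 h1
      · have hb2S2 : b2 ∈ S2 := by
          rcases hS2' with h | h
          · exact absurd t2 (hsep b2 b (Or.inl ⟨h, hbR⟩))
          · exact h
        exact (hsplit2 b2 b t2 hb2S2).2 h2
end

section
/- In a network graph with tree consistency, fix boundary vertices u, v and a vertex x on P(u,v) at cumulative distance δ from u along P(u,v). For any boundary vertex z: if |P(u,v) ∩ P(u,z)| ≥ δ then x lies on P(u,z) at cumulative distance δ from u along P(u,z). -/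
def distTo {V : Type} [DecidableEq V] (W : V × V → ℝ) (p : List V) (x : V) : ℝ :=
  ((pathEdges (p.takeWhile (fun v => v ≠ x) ++ [x])).map W).sum

section Helpers
set_option linter.unusedSectionVars false

variable {V : Type} [DecidableEq V]

lemma pathEdges_nil : pathEdges ([] : List V) = [] := rfl

lemma pathEdges_single (a : V) : pathEdges [a] = [] := rfl

lemma pathEdges_cons_cons (a b : V) (l : List V) :
    pathEdges (a :: b :: l) = (a, b) :: pathEdges (b :: l) := rfl

lemma length_pathEdges (p : List V) : (pathEdges p).length = p.length - 1 := by
  simp only [pathEdges, List.length_zip, List.length_tail]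
  omega

lemma getElem_pathEdges (p : List V) (i : ℕ) (h : i < (pathEdges p).length)
    (h1 : i < p.length) (h2 : i + 1 < p.length) :
    (pathEdges p)[i] = (p[i], p[i + 1]) := by
  simp only [pathEdges] at h ⊢
  rw [List.getElem_zip, List.getElem_tail]

lemma pathEdges_take : ∀ (p : List V) (n : ℕ),
    pathEdges (p.take (n + 1)) = (pathEdges p).take n := by
  intro p
  induction p with
  | nil => intro n; simp [pathEdges_nil]
  | cons a l ih =>
    intro n
    cases l with
    | nil =>
      simp [List.take_succ_cons, pathEdges_single, pathEdges_nil]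
    | cons b l' =>
      cases n with
      | zero => simp [pathEdges_single, List.take_succ_cons]
      | succ m =>
        have h1 : (a :: b :: l').take (m + 1 + 1) = a :: b :: l'.take m := by
          simp [List.take_succ_cons]
        rw [h1, pathEdges_cons_cons, pathEdges_cons_cons]
        have h2 : (b :: l').take (m + 1) = b :: l'.take m := by
          simp [List.take_succ_cons]
        have h3 := ih m
        rw [h2] at h3
        rw [h3, List.take_succ_cons]

lemma pathEdges_chain {E : V → V → Prop} : ∀ {p : List V}, List.Chain' E p →
    ∀ e ∈ pathEdges p, E e.1 e.2 := by
  intro p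
  induction p with
  | nil => intro _ e he; simp [pathEdges_nil] at he
  | cons a l ih =>
    cases l with
    | nil => intro _ e he; simp [pathEdges_single] at he
    | cons b l' =>
      intro hc e he
      rw [pathEdges_cons_cons] at he
      unfold List.Chain' at hc; rw [List.isChain_cons_cons] at hc
      rcases List.mem_cons.mp he with rfl | he
      · exact hc.1
      · exact ih hc.2 e he

lemma fst_mem_of_mem_pathEdges {e : V × V} {p : List V} (h : e ∈ pathEdges p) :
    e.1 ∈ p := by
  obtain ⟨a, b⟩ := e
  exact (List.of_mem_zip h).1

lemma snd_mem_of_mem_pathEdges {e : V × V} {p : List V} (h : e ∈ pathEdges p) :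
    e.2 ∈ p := by
  obtain ⟨a, b⟩ := e
  exact List.mem_of_mem_tail (List.of_mem_zip h).2

lemma nodup_pathEdges : ∀ {p : List V}, p.Nodup → (pathEdges p).Nodup := by
  intro p
  induction p with
  | nil => intro _; simp [pathEdges_nil]
  | cons a l ih =>
    cases l with
    | nil => intro _; simp [pathEdges_single]
    | cons b l' =>
      intro h
      rw [pathEdges_cons_cons, List.nodup_cons]
      refine ⟨fun hmem => ?_, ih h.of_cons⟩
      have ha : a ∈ b :: l' := fst_mem_of_mem_pathEdges hmem
      exact (List.nodup_cons.mp h).1 ha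

lemma takeWhile_ne (x : V) (p : List V) :
    p.takeWhile (fun v => v ≠ x) = p.take (p.idxOf x) := by
  induction p with
  | nil => simp
  | cons a l ih =>
    by_cases h : a = x
    · subst h
      simp [List.idxOf_cons_self]
    · rw [List.idxOf_cons_ne _ h, List.takeWhile_cons_of_pos (by simp [h]),
        Nat.succ_eq_add_one, List.take_succ_cons, ih]

lemma distTo_eq {W : V × V → ℝ} {p : List V} {x : V} (hx : x ∈ p) :
    distTo W p x = (((pathEdges p).take (p.idxOf x)).map W).sum := by
  unfold distTo
  rw [takeWhile_ne]
  have hi : p.idxOf x < p.length := List.idxOf_lt_length_iff.mpr hx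
  have h : p.take (p.idxOf x) ++ [x] = p.take (p.idxOf x + 1) := by
    rw [List.take_succ, List.getElem?_eq_getElem hi, List.getElem_idxOf hi]
    rfl
  rw [h, pathEdges_take]

lemma infix_prefix {c p : List V} (hinf : c <:+: p) (hnd : p.Nodup) {a : V}
    (hhead : p.head? = some a) (ha : a ∈ c) : c <+: p := by
  obtain ⟨s, t, rfl⟩ := hinf
  cases s with
  | nil => exact ⟨t, by simp⟩
  | cons b s' =>
    exfalso
    have hb : b = a := by
      simp only [List.cons_append, List.head?_cons, Option.some.injEq] at hhead
      exact hhead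
    subst hb
    have h2 : b ∉ s' ++ (c ++ t) := by
      have hn : List.Nodup (b :: (s' ++ (c ++ t))) := by simpa using hnd
      exact (List.nodup_cons.mp hn).1
    exact h2 (by simp [ha])

end Helpers

/-- In a tree-consistent network graph with positive edge weights, if `x` lies
on `P(u,v)` at cumulative distance `δ` from `u` and
`|P(u,v) ∩ P(u,z)| ≥ δ`, then `x` lies on `P(u,z)` at cumulative distance `δ`
from `u`. -/
theorem stmt_15 {V : Type} [DecidableEq V]
    (E : V → V → Prop) (W : V × V → ℝ) (VB : Set V) (P : V → V → List V)
    (hwf : WellFormed E VB P) (htc : TreeConsistent VB P)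
    (hWpos : ∀ u v : V, E u v → 0 < W (u, v))
    (u v z : V) (hu : u ∈ VB) (hv : v ∈ VB) (hz : z ∈ VB)
    (huv : u ≠ v) (huz : u ≠ z)
    (x : V) (hx : x ∈ P u v)
    (hge : interLen W (P u v) (P u z) ≥ distTo W (P u v) x) :
    x ∈ P u z ∧ distTo W (P u z) x = distTo W (P u v) x := by
  obtain ⟨hh1, _, hnduv, hchuv, _⟩ := hwf u v hu hv huv
  obtain ⟨hh1z, _, hnduz, hchuz, _⟩ := hwf u z hu hz huz
  obtain ⟨L, hcuv, hcuz, hmem⟩ := htc u v u z hu hv hu hz huv huz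
  set p := P u v with hp
  set q := P u z with hq
  -- u belongs to both paths
  have hup : u ∈ p := List.mem_of_mem_head? (by rw [hh1]; rfl)
  have huq : u ∈ q := List.mem_of_mem_head? (by rw [hh1z]; rfl)
  have huc : u ∈ L := (hmem u).mp ⟨hup, huq⟩
  have hcne : L ≠ [] := by rintro rfl; simp at huc
  -- L is a prefix of both paths
  have hpre1 : L <+: p := infix_prefix hcuv hnduv hh1 huc
  have hndc : L.Nodup := hnduv.sublist hcuv.sublist
  have hpre2 : L <+: q := by
    rcases hcuz with h | h
    · exact infix_prefix h hnduz hh1z huc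
    · have hrev : L.reverse <+: q := infix_prefix h hnduz hh1z (by simpa using huc)
      have hchead : L.head? = some u := by
        obtain ⟨t, ht⟩ := hpre1
        rw [← ht, List.head?_append_of_ne_nil _ hcne] at hh1
        exact hh1
      have hclast : L.getLast? = some u := by
        obtain ⟨t, ht⟩ := hrev
        rw [← ht, List.head?_append_of_ne_nil _ (by simpa using hcne),
          List.head?_reverse] at hh1z
        exact hh1z
      have hcu : L = [u] := by
        cases L with
        | nil => exact absurd rfl hcne
        | cons a L' =>
          have ha : a = u := by simpa using hchead
          rcases List.eq_nil_or_concat L' with rfl | ⟨l2, b, rfl⟩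
          · rw [ha]
          · exfalso
            have hb : b = u := by
              rw [List.concat_eq_append, ← List.cons_append,
                List.getLast?_concat] at hclast
              simpa using hclast
            have hnm : a ∉ l2.concat b := (List.nodup_cons.mp hndc).1
            exact hnm (by rw [ha, ← hb]; simp)
      rw [hcu] at hrev ⊢
      simpa using hrev
  clear hcuv hcuz
  -- notation
  obtain ⟨m, hm⟩ : ∃ m, L.length = m + 1 := by
    cases L with
    | nil => exact absurd rfl hcne
    | cons a l => exact ⟨l.length, by simp⟩
  set pc := pathEdges L with hpc
  set pv := pathEdges p with hpv
  set pz := pathEdges q with hpz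
  have hcp : L = p.take (m + 1) := by
    rw [← hm]; exact List.prefix_iff_eq_take.mp hpre1
  have hcq : L = q.take (m + 1) := by
    rw [← hm]; exact List.prefix_iff_eq_take.mp hpre2
  have hclenp : L.length ≤ p.length := hpre1.length_le
  have hpcv : pc = pv.take m := by rw [hpc, hcp, pathEdges_take]
  have hpcz : pc = pz.take m := by rw [hpc, hcq, pathEdges_take]
  -- all edge weights along p are positive
  have hpos : ∀ e ∈ pv, 0 < W e := by
    intro e he
    have hE := pathEdges_chain hchuv e he
    have := hWpos e.1 e.2 hE
    simpa using this
  -- key claim: an edge of p lies on q iff it is an edge of L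
  have hclaim : ∀ e ∈ pv, (e ∈ pz ↔ e ∈ pc) := by
    intro e he
    constructor
    · intro hez
      obtain ⟨i, hi, hie⟩ := List.getElem_of_mem he
      have hlv : pv.length = p.length - 1 := length_pathEdges p
      have hi1 : i < p.length := by omega
      have hi2 : i + 1 < p.length := by omega
      have heq : e = (p[i], p[i + 1]) := by
        rw [← hie, getElem_pathEdges p i hi hi1 hi2]
      have he2c : e.2 ∈ L := by
        refine (hmem e.2).mp ⟨?_, ?_⟩
        · exact snd_mem_of_mem_pathEdges (p := p) he
        · exact snd_mem_of_mem_pathEdges (p := q) hez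
      obtain ⟨j, hj, hje⟩ := List.getElem_of_mem he2c
      have hjk : j < m + 1 := by omega
      have hjp : j < p.length := by omega
      have hcj : L[j]'hj = p[j]'hjp := by
        have h0 : L[j]'hj = (p.take (m + 1))[j]'(by rw [← hcp]; exact hj) := by
          congr 1
        rw [h0, List.getElem_take]
      have hpij : p[j]'hjp = p[i + 1]'hi2 := by
        rw [← hcj, hje, heq]
      have hji : j = i + 1 := (hnduv.getElem_inj_iff).mp hpij
      have hikm : i < m := by omega
      rw [hpcv]
      have hilen : i < (pv.take m).length := by
        rw [List.length_take]
        omega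
      have hgl : (pv.take m)[i]'hilen = e := by
        rw [List.getElem_take, hie]
      exact hgl ▸ List.getElem_mem hilen
    · intro hec
      have hsub : pc ⊆ pz := by rw [hpcz]; exact List.take_subset _ _
      exact hsub hec
  -- compute interLen
  have hndpv : pv.Nodup := nodup_pathEdges hnduv
  have hfilter : pv.filter (fun e => decide (e ∈ pz)) = pc := by
    have hsplit : pv = pc ++ pv.drop m := by
      rw [hpcv]; exact (List.take_append_drop _ _).symm
    have hdisj : List.Disjoint pc (pv.drop m) := by
      have hn := hsplit ▸ hndpv
      exact (List.nodup_append'.mp hn).2.2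
    conv_lhs => rw [hsplit]
    rw [List.filter_append]
    have h1 : pc.filter (fun e => decide (e ∈ pz)) = pc := by
      rw [List.filter_eq_self]
      intro a ha
      simp only [decide_eq_true_eq]
      exact ((hclaim a (hsplit ▸ List.mem_append_left _ ha)).mpr ha)
    have h2 : (pv.drop m).filter (fun e => decide (e ∈ pz)) = [] := by
      rw [List.filter_eq_nil_iff]
      intro a ha
      simp only [decide_eq_true_eq]
      intro haz
      have hapv : a ∈ pv := List.drop_subset _ _ ha
      have hac : a ∈ pc := (hclaim a hapv).mp haz
      exact hdisj hac ha
    rw [h1, h2, List.append_nil]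
  have hinter : interLen W p q = (pc.map W).sum := by
    unfold interLen
    rw [← hpv, ← hpz, hfilter]
  -- the index of x in p
  set i := p.idxOf x with hi
  have hixlt : i < p.length := List.idxOf_lt_length_iff.mpr hx
  have hdx : distTo W p x = ((pv.take i).map W).sum := distTo_eq hx
  -- show i < m + 1
  have hik : i < m + 1 := by
    by_contra hcon
    push_neg at hcon
    have hlenpv : pv.length = p.length - 1 := length_pathEdges p
    have hsum : ((pv.take i).map W).sum
        = (pc.map W).sum + (((pv.take i).drop m).map W).sum := by
      have h1 : (pv.take i).take m = pc := by
        rw [List.take_take, hpcv]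
        congr 1
        omega
      conv_lhs => rw [← List.take_append_drop m (pv.take i)]
      rw [List.map_append, List.sum_append, h1]
    have hne : (pv.take i).drop m ≠ [] := by
      intro hnil
      have hl := congrArg List.length hnil
      simp only [List.length_drop, List.length_take, List.length_nil] at hl
      omega
    have hrestpos : 0 < (((pv.take i).drop m).map W).sum := by
      apply List.sum_pos
      · intro y hy
        obtain ⟨e, he, rfl⟩ := List.mem_map.mp hy
        exact hpos e (List.take_subset _ _ (List.drop_subset _ _ he))
      · simpa using hne
    have hlt : interLen W p q < distTo W p x := by
      rw [hinter, hdx, hsum]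
      linarith
    linarith
  -- x is in L
  have hcidx : L[i]'(by omega) = x := by
    have h0 : L[i]'(by omega) = (p.take (m + 1))[i]'(by rw [← hcp]; omega) := by
      congr 1
    rw [h0, List.getElem_take]
    exact List.getElem_idxOf hixlt
  have hxc : x ∈ L := hcidx ▸ List.getElem_mem (by omega)
  have hxq : x ∈ q := hpre2.subset hxc
  refine ⟨hxq, ?_⟩
  -- the index of x in q equals i
  have hixc : L.idxOf x = i := by
    rw [← hcidx]
    exact List.Nodup.idxOf_getElem hndc i (by omega)
  have hixq : q.idxOf x = i := by
    obtain ⟨t, ht⟩ := hpre2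
    rw [← ht, List.idxOf_append_of_mem hxc, hixc]
  have hdz : distTo W q x = ((pz.take i).map W).sum := by
    rw [distTo_eq hxq, hixq]
  -- the first i edges agree
  have htake : pz.take i = pv.take i := by
    have h1 : pz.take i = pc.take i := by
      rw [hpcz, List.take_take]
      congr 1
      omega
    have h2 : pv.take i = pc.take i := by
      rw [hpcv, List.take_take]
      congr 1
      omega
    rw [h1, h2]
  rw [hdz, hdx, htake]
end
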